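/- Explained information decomposition: let h be a set function on subsets of P with h(∅)=0, δ its forward differences, and for disjoint sets define I(K ⊥ A) = h(K) + h(A) - h(K ∪ A) for a singleton K = {k}. Then I({k} ⊥ A) = ∑_{i ∈ A} I({k} ⊥ {i}) - ∑_{B ⊆ A, |B| ≥ 2} δ(B ∪ {k}). -/

import Mathlib

open Finset

lemma alt_sum_real {α : Type*} [DecidableEq α] (x : Finset α) :
    (∑ m ∈ x.powerset, (-1 : ℝ) ^ m.card) = if x = ∅ then 1 else 0 := by
  have := Finset.sum_powerset_neg_one_pow_card (x := x)
  have : ((∑ m ∈ x.powerset, (-1 : ℤ) ^ m.card : ℤ) : ℝ)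
      = ((if x = ∅ then 1 else 0 : ℤ) : ℝ) := by rw [this]
  push_cast at this
  simpa using this

lemma mobius_inv {α : Type*} [DecidableEq α] (h δ : Finset α → ℝ)
    (hδ : ∀ A : Finset α,
      δ A = ∑ B ∈ A.powerset, (-1 : ℝ) ^ (A.card - B.card) * h B)
    (S : Finset α) : ∑ B ∈ S.powerset, δ B = h S := by
  calc ∑ B ∈ S.powerset, δ B
      = ∑ B ∈ S.powerset, ∑ C ∈ B.powerset, (-1 : ℝ) ^ (B.card - C.card) * h C := by
        exact Finset.sum_congr rfl fun B _ => hδ B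
    _ = ∑ C ∈ S.powerset, ∑ B ∈ S.powerset.filter (fun B => C ⊆ B),
          (-1 : ℝ) ^ (B.card - C.card) * h C := by
        refine Finset.sum_comm' ?_
        intro B C
        simp only [mem_powerset, mem_filter]
        constructor
        · rintro ⟨h1, h2⟩; exact ⟨⟨h1, h2⟩, h2.trans h1⟩
        · rintro ⟨⟨h1, h2⟩, _⟩; exact ⟨h1, h2⟩
    _ = ∑ C ∈ S.powerset,
          (∑ D ∈ (S \ C).powerset, (-1 : ℝ) ^ D.card) * h C := by
        refine Finset.sum_congr rfl fun C hC => ?_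
        rw [Finset.sum_mul]
        refine Finset.sum_nbij' (fun B => B \ C) (fun D => D ∪ C) ?_ ?_ ?_ ?_ ?_
        · intro B hB
          simp only [mem_filter, mem_powerset] at hB ⊢
          exact sdiff_subset_sdiff hB.1 Subset.rfl
        · intro D hD
          simp only [mem_powerset, mem_filter] at hD ⊢
          exact ⟨union_subset (hD.trans sdiff_subset) (mem_powerset.1 hC),
            subset_union_right⟩
        · intro B hB
          simp only [mem_filter, mem_powerset] at hB
          exact sdiff_union_of_subset hB.2
        · intro D hD
          simp only [mem_powerset] at hD
          show (D ∪ C) \ C = D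
          rw [union_sdiff_right]
          exact sdiff_eq_self_of_disjoint
            (disjoint_of_subset_left hD (sdiff_disjoint))
        · intro B hB
          simp only [mem_filter, mem_powerset] at hB
          rw [card_sdiff_of_subset hB.2]
    _ = h S := by
        rw [Finset.sum_eq_single S]
        · rw [sdiff_self]
          simp
        · intro C hC hCS
          rw [alt_sum_real, if_neg, zero_mul]
          intro hempty
          exact hCS (Finset.Subset.antisymm (mem_powerset.1 hC)
            (Finset.sdiff_eq_empty_iff_subset.mp hempty))
        · intro hS; exact absurd (mem_powerset_self S) hS

theorem stmt_8 {α : Type*} [DecidableEq α] (P : Finset α)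
    (h : Finset α → ℝ) (h0 : h ∅ = 0)
    (δ : Finset α → ℝ)
    (hδ : ∀ A : Finset α,
      δ A = ∑ B ∈ A.powerset, (-1 : ℝ) ^ (A.card - B.card) * h B)
    (k : α) (hk : k ∈ P) (A : Finset α) (hA : A ⊆ P.erase k) :
    h {k} + h A - h (insert k A)
      = (∑ i ∈ A, (h {k} + h {i} - h {i, k}))
        - ∑ B ∈ A.powerset.filter (fun B => 2 ≤ B.card), δ (B ∪ {k}) := by
  have hkA : k ∉ A := fun hx => (Finset.notMem_erase k P) (hA hx)
  have hinv := mobius_inv h δ hδ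
  -- h (insert k A) = h A + ∑_{B ⊆ A} δ (insert k B)
  have hsplit : h (insert k A) = h A + ∑ B ∈ A.powerset, δ (insert k B) := by
    rw [← hinv (insert k A), Finset.sum_powerset_insert hkA, hinv A]
  -- partition powerset of A by card
  have hpart : ∑ B ∈ A.powerset, δ (insert k B)
      = ∑ B ∈ A.powerset.filter (fun B => B.card ≤ 1), δ (insert k B)
        + ∑ B ∈ A.powerset.filter (fun B => 2 ≤ B.card), δ (insert k B) := by
    rw [← Finset.sum_filter_add_sum_filter_not A.powerset (fun B => B.card ≤ 1)]
    congr 1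
    apply Finset.sum_congr _ fun _ _ => rfl
    apply Finset.filter_congr
    intro B _
    simp only [not_le]
    constructor <;> intro <;> omega
  have hsmall : A.powerset.filter (fun B => B.card ≤ 1)
      = insert ∅ (A.image fun i => ({i} : Finset α)) := by
    ext B
    simp only [mem_filter, mem_powerset, mem_insert, mem_image]
    constructor
    · rintro ⟨hBA, hcard⟩
      interval_cases hc : B.card
      · left; exact card_eq_zero.mp hc
      · right
        obtain ⟨i, hi⟩ := card_eq_one.mp hc
        exact ⟨i, hBA (hi ▸ mem_singleton_self i), hi.symm⟩
    · rintro (rfl | ⟨i, hi, rfl⟩)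
      · simp
      · simp [singleton_subset_iff.mpr hi]
  have hδk : δ {k} = h {k} := by
    rw [hδ, show ({k} : Finset α) = insert k ∅ from rfl,
      Finset.sum_powerset_insert (Finset.notMem_empty k)]
    simp [h0]
  have hδik : ∀ i, i ≠ k → δ (insert k {i}) = h {i, k} - h {i} - h {k} := by
    intro i hik
    have hki : k ∉ ({i} : Finset α) := by simp [Ne.symm hik]
    rw [Finset.pair_comm i k, hδ, Finset.sum_powerset_insert hki,
      show ({i} : Finset α) = insert i ∅ from rfl,
      Finset.sum_powerset_insert (Finset.notMem_empty i),
      Finset.sum_powerset_insert (Finset.notMem_empty i)]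
    simp [h0, Finset.card_insert_of_notMem, hki, Finset.notMem_empty]
    ring
  have hsum1 : ∑ B ∈ insert ∅ (A.image fun i => ({i} : Finset α)), δ (insert k B)
      = h {k} + ∑ i ∈ A, (h {i, k} - h {i} - h {k}) := by
    rw [Finset.sum_insert (by simp), Finset.sum_image (by simp)]
    have h1 : δ (insert k ∅) = h {k} := hδk
    rw [h1]
    congr 1
    exact Finset.sum_congr rfl fun i hi => hδik i (fun hik => hkA (hik ▸ hi))
  have hunion : ∀ B ∈ A.powerset.filter (fun B => 2 ≤ B.card),
      δ (insert k B) = δ (B ∪ {k}) := by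
    intro B _
    congr 1
    ext x; simp
  rw [hsplit, hpart, hsmall, hsum1, Finset.sum_congr rfl hunion]
  simp only [Finset.sum_add_distrib, Finset.sum_sub_distrib]
  ring
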